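/- Let G be a graph with a k-cluster modulator R of size r (so G − R is a disjoint union of k cliques S_1, …, S_k). Then the Grundy number of G equals γ′ + max_{i=1..k} |S_i ∖ Q| for any set Q ⊆ V(G)∖R and any extendable Grundy coloring (C′_1, …, C′_{γ′}) of G[Q ∪ R], where extendable means that (C′_1, …, C′_{γ′}) is a subsequence of some optimal Grundy coloring of G whose remaining color classes consist solely of vertices of V(G)∖(R ∪ Q). -/

import Mathlib

variable {V : Type*} [Fintype V] [DecidableEq V]

/-- A Grundy coloring of the vertex set `X` of `G`: an ordered partition of `X`
into nonempty independent sets such that every vertex of the `i`-th class has a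
neighbor in every earlier class. -/
def GrundyColoringOn (G : SimpleGraph V) (X : Finset V) (C : List (Finset V)) : Prop :=
  (∀ A ∈ C, A.Nonempty) ∧
  C.Pairwise Disjoint ∧
  (∀ v, v ∈ X ↔ ∃ A ∈ C, v ∈ A) ∧
  (∀ A ∈ C, ∀ u ∈ A, ∀ w ∈ A, ¬ G.Adj u w) ∧
  (∀ i j : ℕ, ∀ hi : i < C.length, ∀ hj : j < C.length, j < i →
     ∀ v ∈ C.get ⟨i, hi⟩, ∃ u ∈ C.get ⟨j, hj⟩, G.Adj u v)

/-- The set of lengths of Grundy colorings of `X` in `G`; its greatest element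
is the Grundy number of the induced subgraph `G[X]`. -/
def grundySet (G : SimpleGraph V) (X : Finset V) : Set ℕ :=
  {n | ∃ C : List (Finset V), GrundyColoringOn G X C ∧ C.length = n}

/-- For a k-cluster modulator `R` (so `G - R` is the disjoint union of cliques `S 1, …, S k`),
if a Grundy coloring of `G[Q ∪ R]` is extendable (a subsequence of some optimal Grundy
coloring of `G` whose remaining classes consist solely of vertices outside `R ∪ Q`), then
the Grundy number of `G` equals `γ' + max_i |S i ∖ Q|`. -/
theorem stmt16 (G : SimpleGraph V) (R : Finset V) (r k : ℕ) (hr : R.card = r)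
    (S : Fin k → Finset V)
    (hcl : ∀ i, G.IsClique ↑(S i))
    (hdisj : ∀ i j, i ≠ j → Disjoint (S i) (S j))
    (hcover : Finset.univ.biUnion S = Finset.univ \ R)
    (hsep : ∀ i j, i ≠ j → ∀ u ∈ S i, ∀ v ∈ S j, ¬ G.Adj u v)
    (hne : ∀ i, (S i).Nonempty)
    (Q : Finset V) (hQ : Q ⊆ Finset.univ \ R)
    (C' : List (Finset V)) (hC' : GrundyColoringOn G (Q ∪ R) C')
    (γ : ℕ) (hγ : IsGreatest (grundySet G Finset.univ) γ)
    (hext : ∃ C : List (Finset V), GrundyColoringOn G Finset.univ C ∧ C.length = γ ∧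
      C'.Sublist C ∧ (∀ A ∈ C, A ∉ C' → ∀ v ∈ A, v ∉ R ∪ Q)) :
    γ = C'.length + Finset.univ.sup (fun i : Fin k => (S i \ Q).card) := by
  classical
  obtain ⟨C, hC, hlen, hsub, hout⟩ := hext
  obtain ⟨hCne, hCdisj, hCcov, hCind, hCgr⟩ := hC
  obtain ⟨hC'ne, hC'disj, hC'cov, hC'ind, hC'gr⟩ := hC'
  -- vertices of cliques avoid R
  have hSR : ∀ (i : Fin k) (v : V), v ∈ S i → v ∉ R := by
    intro i v hv hvR
    have hm : v ∈ Finset.univ.biUnion S :=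
      Finset.mem_biUnion.mpr ⟨i, Finset.mem_univ i, hv⟩
    rw [hcover, Finset.mem_sdiff] at hm
    exact hm.2 hvR
  have hinS : ∀ v : V, v ∉ R → ∃ i, v ∈ S i := by
    intro v hvR
    have hm : v ∈ Finset.univ.biUnion S := by
      rw [hcover, Finset.mem_sdiff]; exact ⟨Finset.mem_univ v, hvR⟩
    obtain ⟨i, -, hi⟩ := Finset.mem_biUnion.mp hm
    exact ⟨i, hi⟩
  -- pairwise disjointness for distinct members
  have hdisjC : ∀ A ∈ C, ∀ B ∈ C, A ≠ B → Disjoint A B := by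
    intro A hA B hB hAB
    haveI : Std.Symm (α := Finset V) Disjoint := ⟨fun _ _ h => h.symm⟩
    exact hCdisj.forall hA hB hAB
  have hCnodup : C.Nodup := by
    refine List.Pairwise.imp_mem.mpr (hCdisj.imp ?_)
    intro A B h hA hB hAB
    subst hAB
    exact (hCne A hA).ne_empty (by simpa using disjoint_self.mp h)
  have hC'nodup : C'.Nodup := hsub.nodup hCnodup
  set extras : List (Finset V) := C.filter (fun A => decide (A ∉ C')) with hextras
  have hmem_extras : ∀ A, A ∈ extras ↔ A ∈ C ∧ A ∉ C' := by
    intro A; simp [hextras, List.mem_filter]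
  have hextnodup : extras.Nodup := hCnodup.filter _
  set m : ℕ := extras.length with hm
  -- kept classes are exactly C'
  have hkept : (C.filter (fun A => ! decide (A ∉ C'))).length = C'.length := by
    have hknodup : (C.filter (fun A => ! decide (A ∉ C'))).Nodup := hCnodup.filter _
    have hset : (C.filter (fun A => ! decide (A ∉ C'))).toFinset = C'.toFinset := by
      ext A
      simp only [List.mem_toFinset, List.mem_filter, Bool.not_eq_true', decide_eq_false_iff_not,
        not_not]
      exact ⟨fun h => h.2, fun h => ⟨hsub.subset h, h⟩⟩
    have := List.toFinset_card_of_nodup hknodup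
    rw [hset, List.toFinset_card_of_nodup hC'nodup] at this
    exact this.symm
  have hγm : γ = C'.length + m := by
    rw [← hlen, C.length_eq_length_filter_add (fun A => decide (A ∉ C'))]
    rw [hkept, hm, hextras]; omega
  have hcardext : extras.toFinset.card = m := List.toFinset_card_of_nodup hextnodup
  -- Claim 1 : each |S i \ Q| ≤ m
  have claim1 : ∀ i : Fin k, (S i \ Q).card ≤ m := by
    intro i
    rw [← hcardext]
    have hcls : ∀ v ∈ S i \ Q, ∃ A, A ∈ C ∧ v ∈ A ∧ A ∉ C' := by
      intro v hv
      rw [Finset.mem_sdiff] at hv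
      obtain ⟨A, hA, hvA⟩ := (hCcov v).mp (Finset.mem_univ v)
      refine ⟨A, hA, hvA, fun hAC' => ?_⟩
      have : v ∈ Q ∪ R := (hC'cov v).mpr ⟨A, hAC', hvA⟩
      rcases Finset.mem_union.mp this with h | h
      · exact hv.2 h
      · exact hSR i v hv.1 h
    set f : V → Finset V := fun v => if h : ∃ A, A ∈ C ∧ v ∈ A ∧ A ∉ C' then h.choose else ∅
      with hf
    have hfspec : ∀ v ∈ S i \ Q, f v ∈ C ∧ v ∈ f v ∧ f v ∉ C' := by
      intro v hv
      have h := hcls v hv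
      simp only [hf, dif_pos h]
      exact h.choose_spec
    refine Finset.card_le_card_of_injOn f ?_ ?_
    · intro v hv
      rw [Finset.mem_coe, List.mem_toFinset, hmem_extras]
      exact ⟨(hfspec v hv).1, (hfspec v hv).2.2⟩
    · intro u hu v hv hfe
      by_contra huv
      have hadj : G.Adj u v := hcl i (Finset.mem_coe.mpr (Finset.mem_sdiff.mp hu).1)
        (Finset.mem_coe.mpr (Finset.mem_sdiff.mp hv).1) huv
      exact hCind (f u) (hfspec u hu).1 u (hfspec u hu).2.1 v (hfe ▸ (hfspec v hv).2.1) hadj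
  -- Claim 2 : m ≤ sup
  have claim2 : m ≤ Finset.univ.sup (fun i : Fin k => (S i \ Q).card) := by
    rcases Nat.eq_zero_or_pos m with h0 | hpos
    · omega
    · -- pick the extra class with largest index
      have hextne : extras.toFinset.Nonempty := by
        rw [← Finset.card_pos, hcardext]; exact hpos
      obtain ⟨A, hAmem, hAmax⟩ := Finset.exists_max_image extras.toFinset
        (fun B => C.idxOf B) hextne
      rw [List.mem_toFinset, hmem_extras] at hAmem
      obtain ⟨hAC, hAC'⟩ := hAmem
      obtain ⟨v, hvA⟩ := hCne A hAC
      have hvRQ : v ∉ R ∪ Q := hout A hAC hAC' v hvA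
      have hvR : v ∉ R := fun h => hvRQ (Finset.mem_union_left _ h)
      have hvQ : v ∉ Q := fun h => hvRQ (Finset.mem_union_right _ h)
      obtain ⟨i, hvi⟩ := hinS v hvR
      -- every extra class contains a vertex of S i \ Q
      have hgex : ∀ B, B ∈ extras.toFinset → ∃ u, u ∈ B ∧ u ∈ S i \ Q := by
        intro B hB
        rw [List.mem_toFinset, hmem_extras] at hB
        by_cases hBA : B = A
        · exact ⟨v, hBA ▸ hvA, Finset.mem_sdiff.mpr ⟨hvi, hvQ⟩⟩
        · -- B comes strictly before A, use the Grundy property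
          have hiB : C.idxOf B < C.length := List.idxOf_lt_length_iff.mpr hB.1
          have hiA : C.idxOf A < C.length := List.idxOf_lt_length_iff.mpr hAC
          have hlt : C.idxOf B < C.idxOf A := by
            have hle : C.idxOf B ≤ C.idxOf A :=
              hAmax B (by rw [List.mem_toFinset, hmem_extras]; exact hB)
            rcases lt_or_eq_of_le hle with h | h
            · exact h
            · exact absurd ((List.idxOf_inj hB.1).mp h) hBA
          have hvget : v ∈ C.get ⟨C.idxOf A, hiA⟩ := by
            rw [List.idxOf_get]; exact hvA
          obtain ⟨u, hu, hadj⟩ := hCgr (C.idxOf A) (C.idxOf B) hiA hiB hlt v hvget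
          rw [List.idxOf_get] at hu
          have huRQ : u ∉ R ∪ Q := hout B hB.1 hB.2 u hu
          have huR : u ∉ R := fun h => huRQ (Finset.mem_union_left _ h)
          have huQ : u ∉ Q := fun h => huRQ (Finset.mem_union_right _ h)
          obtain ⟨j, huj⟩ := hinS u huR
          have hji : j = i := by
            by_contra hji
            exact hsep j i hji u huj v hvi hadj
          exact ⟨u, hu, Finset.mem_sdiff.mpr ⟨hji ▸ huj, huQ⟩⟩
      set g : Finset V → V := fun B => if h : ∃ u, u ∈ B ∧ u ∈ S i \ Q then h.choose else v
        with hg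
      have hgspec : ∀ B ∈ extras.toFinset, g B ∈ B ∧ g B ∈ S i \ Q := by
        intro B hB
        have h := hgex B hB
        simp only [hg, dif_pos h]
        exact h.choose_spec
      have : extras.toFinset.card ≤ (S i \ Q).card := by
        refine Finset.card_le_card_of_injOn g (fun B hB => (hgspec B hB).2) ?_
        intro B₁ hB₁ B₂ hB₂ hge
        by_contra hBne
        have hd : Disjoint B₁ B₂ := by
          rw [Finset.mem_coe, List.mem_toFinset, hmem_extras] at hB₁ hB₂
          exact hdisjC B₁ hB₁.1 B₂ hB₂.1 hBne
        exact (Finset.disjoint_left.mp hd (hgspec B₁ hB₁).1) (hge ▸ (hgspec B₂ hB₂).1)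
      calc m = extras.toFinset.card := hcardext.symm
        _ ≤ (S i \ Q).card := this
        _ ≤ Finset.univ.sup (fun i : Fin k => (S i \ Q).card) :=
            Finset.le_sup (f := fun i : Fin k => (S i \ Q).card) (Finset.mem_univ i)
  have hsup : Finset.univ.sup (fun i : Fin k => (S i \ Q).card) ≤ m :=
    Finset.sup_le (fun i _ => claim1 i)
  omega
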